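/- Suppose treatment homogeneity holds: δ(l) = δ̃(l,u) for all u, where δ(l) = P(A=1|Z=1,L=l) − P(A=1|Z=0,L=l) and δ̃(l,u) = P(A=1|Z=1,L=l,U=u) − P(A=1|Z=0,L=l,U=u), together with IV independence (Z ⫫ U | L), latent unconfoundedness (Yᵃ ⫫ (Z,A) | L,U), exclusion restriction, consistency, δ(l) ≠ 0, and IV positivity (0 < P(Z=1|L=l) < 1). Then E[Yᵃ | L=l] = E[ (2Z−1)·1{A=a}·Y·(2a−1) / (δ(L)·f(Z|L)) | L=l ], where f(z|l) = P(Z=z|L=l). -/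

import Mathlib

open scoped Classical
open Finset

noncomputable def pr {Ω : Type*} [Fintype Ω] (p : Ω → ℝ) (E : Ω → Prop) : ℝ :=
  ∑ ω, if E ω then p ω else 0

noncomputable def cex {Ω : Type*} [Fintype Ω] (p : Ω → ℝ) (f : Ω → ℝ) (E : Ω → Prop) : ℝ :=
  (∑ ω, if E ω then p ω * f ω else 0) / pr p E

noncomputable def ex {Ω : Type*} [Fintype Ω] (p : Ω → ℝ) (f : Ω → ℝ) : ℝ :=
  ∑ ω, p ω * f ω

noncomputable def cpr {Ω : Type*} [Fintype Ω] (p : Ω → ℝ) (E F : Ω → Prop) : ℝ :=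
  pr p (fun ω => E ω ∧ F ω) / pr p F

section aux
variable {Ω : Type*} [Fintype Ω]

lemma sum_if_congr (g : Ω → ℝ) {E F : Ω → Prop} (h : ∀ ω, E ω ↔ F ω) :
    (∑ ω, if E ω then g ω else 0) = ∑ ω, if F ω then g ω else 0 := by
  apply Finset.sum_congr rfl
  intro ω _
  simp [h ω]

lemma pr_congr (p : Ω → ℝ) {E F : Ω → Prop} (h : ∀ ω, E ω ↔ F ω) : pr p E = pr p F :=
  sum_if_congr p h

lemma pr_mono (p : Ω → ℝ) (hp : ∀ ω, 0 ≤ p ω) {E F : Ω → Prop} (h : ∀ ω, E ω → F ω) :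
    pr p E ≤ pr p F := by
  unfold pr
  refine Finset.sum_le_sum fun ω _ => ?_
  by_cases hE : E ω
  · simp [hE, h ω hE]
  · by_cases hF : F ω <;> simp [hE, hF, hp ω]

lemma sum_split {ι : Type*} [Fintype ι] (g : Ω → ℝ) (E : Ω → Prop) (X : Ω → ι) :
    (∑ ω, if E ω then g ω else 0) = ∑ i, ∑ ω, if E ω ∧ X ω = i then g ω else 0 := by
  have h : ∀ ω, (if E ω then g ω else 0) = ∑ i, if E ω ∧ X ω = i then g ω else 0 := by
    intro ω; by_cases hE : E ω <;> simp [hE]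
  simp_rw [h]
  exact Finset.sum_comm

lemma pr_split {ι : Type*} [Fintype ι] (p : Ω → ℝ) (E : Ω → Prop) (X : Ω → ι) :
    pr p E = ∑ i, pr p (fun ω => E ω ∧ X ω = i) := by
  simp only [pr]
  rw [sum_split p E X]
  exact Finset.sum_congr rfl fun i _ => Finset.sum_congr rfl fun ω _ => by congr 1

end aux

noncomputable def num {Ω : Type*} [Fintype Ω] (p : Ω → ℝ) (g : Ω → ℝ) (E : Ω → Prop) : ℝ :=
  ∑ ω, if E ω then p ω * g ω else 0

section aux2
variable {Ω : Type*} [Fintype Ω]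

lemma cex_eq_num_div (p g : Ω → ℝ) (E : Ω → Prop) : cex p g E = num p g E / pr p E := rfl

lemma num_mul (p g : Ω → ℝ) {E : Ω → Prop} (h : pr p E ≠ 0) :
    num p g E = cex p g E * pr p E := by
  rw [cex_eq_num_div, div_mul_cancel₀ _ h]

lemma num_congr (p g : Ω → ℝ) {E F : Ω → Prop} (h : ∀ ω, E ω ↔ F ω) :
    num p g E = num p g F := by
  unfold num
  apply Finset.sum_congr rfl
  intro ω _
  simp [h ω]

lemma num_fun_congr (p : Ω → ℝ) (hp : ∀ ω, 0 ≤ p ω) (g h : Ω → ℝ) (E : Ω → Prop)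
    (hgh : ∀ ω, E ω → 0 < p ω → g ω = h ω) : num p g E = num p h E := by
  unfold num
  apply Finset.sum_congr rfl
  intro ω _
  by_cases hE : E ω
  · rcases (hp ω).lt_or_eq with hpω | hpω
    · rw [hgh ω hE hpω]
    · rw [← hpω]; simp
  · simp [hE]

lemma num_zero (p : Ω → ℝ) (E : Ω → Prop) : num p (fun _ => (0:ℝ)) E = 0 := by
  unfold num
  apply Finset.sum_eq_zero
  intro ω _
  split <;> simp

lemma num_const_mul (p g : Ω → ℝ) (c : ℝ) (E : Ω → Prop) :
    num p (fun ω => c * g ω) E = c * num p g E := by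
  unfold num
  rw [Finset.mul_sum]
  apply Finset.sum_congr rfl
  intro ω _
  split <;> ring

lemma num_split {ι : Type*} [Fintype ι] (p g : Ω → ℝ) (E : Ω → Prop) (X : Ω → ι) :
    num p g E = ∑ i, num p g (fun ω => E ω ∧ X ω = i) := by
  unfold num
  rw [sum_split (fun ω => p ω * g ω) E X]
  exact Finset.sum_congr rfl fun i _ => Finset.sum_congr rfl fun ω _ => by congr 1

end aux2

/-- IV identification (Cui–Tchetgen Tchetgen type): under latent unconfoundedness,
IV independence, exclusion restriction (built into `Y` depending only on `a`),
consistency, treatment homogeneity, `δ(l) ≠ 0`, and IV positivity,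
`E[Yᵃ | L = l] = E[(2Z−1)·1{A=a}·Y·(2a−1)/(δ(L)·f(Z|L)) | L = l]`. -/
theorem stmt12
    {Ω 𝓛 𝒰 : Type*} [Fintype Ω] [Fintype 𝓛] [Fintype 𝒰]
    (p : Ω → ℝ) (hp : ∀ ω, 0 ≤ p ω) (hsum : ∑ ω, p ω = 1)
    (Y : Bool → Ω → ℝ) (Yo : Ω → ℝ) (A Z : Ω → Bool) (L : Ω → 𝓛) (U : Ω → 𝒰)
    (δ : 𝓛 → ℝ) (δt : 𝓛 → 𝒰 → ℝ) (f : Bool → 𝓛 → ℝ)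
    -- all conditioning events have positive probability
    (hjointpos : ∀ (z a : Bool) (l : 𝓛) (u : 𝒰),
      pr p (fun ω => Z ω = z ∧ A ω = a ∧ L ω = l ∧ U ω = u) > 0)
    -- consistency
    (hcons : ∀ ω, 0 < p ω → Yo ω = Y (A ω) ω)
    -- δ(l) = P(A=1 | Z=1, L=l) − P(A=1 | Z=0, L=l)
    (hδ : ∀ l, δ l =
      cpr p (fun ω => A ω = true) (fun ω => Z ω = true ∧ L ω = l) -
      cpr p (fun ω => A ω = true) (fun ω => Z ω = false ∧ L ω = l))
    -- δ̃(l,u) = P(A=1 | Z=1, L=l, U=u) − P(A=1 | Z=0, L=l, U=u)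
    (hδt : ∀ l u, δt l u =
      cpr p (fun ω => A ω = true) (fun ω => Z ω = true ∧ L ω = l ∧ U ω = u) -
      cpr p (fun ω => A ω = true) (fun ω => Z ω = false ∧ L ω = l ∧ U ω = u))
    -- f(z|l) = P(Z=z | L=l)
    (hf : ∀ z l, f z l = cpr p (fun ω => Z ω = z) (fun ω => L ω = l))
    -- treatment homogeneity
    (hhom : ∀ l u, δ l = δt l u)
    -- IV independence: Z ⫫ U | L
    (hIVind : ∀ (u : 𝒰) (z : Bool) (l : 𝓛),
      cpr p (fun ω => U ω = u) (fun ω => Z ω = z ∧ L ω = l) =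
      cpr p (fun ω => U ω = u) (fun ω => L ω = l))
    -- latent unconfoundedness: Yᵃ ⫫ (Z, A) | L, U (conditional mean form)
    (hlat : ∀ (a z a' : Bool) (l : 𝓛) (u : 𝒰),
      cex p (Y a) (fun ω => Z ω = z ∧ A ω = a' ∧ L ω = l ∧ U ω = u) =
      cex p (Y a) (fun ω => L ω = l ∧ U ω = u))
    -- relevance: δ(l) ≠ 0
    (hδne : ∀ l, δ l ≠ 0)
    -- IV positivity: 0 < f(1|l) < 1
    (hIVpos : ∀ l, 0 < f true l ∧ f true l < 1) :
    ∀ (a : Bool) (l : 𝓛),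
      cex p (Y a) (fun ω => L ω = l) =
      cex p (fun ω =>
        (if Z ω then (1:ℝ) else -1) * (if A ω = a then (1:ℝ) else 0) * Yo ω *
          (if a then (1:ℝ) else -1) / (δ (L ω) * f (Z ω) (L ω)))
        (fun ω => L ω = l) := by
  intro a l
  -- positivity facts
  have hQpos : ∀ z a' u, 0 < pr p (fun ω => Z ω = z ∧ A ω = a' ∧ L ω = l ∧ U ω = u) :=
    fun z a' u => hjointpos z a' l u
  have hwpos : ∀ u, 0 < pr p (fun ω => L ω = l ∧ U ω = u) := fun u =>
    lt_of_lt_of_le (hQpos true true u) (pr_mono p hp (fun ω h => ⟨h.2.2.1, h.2.2.2⟩))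
  have hrpos : ∀ z u, 0 < pr p (fun ω => Z ω = z ∧ L ω = l ∧ U ω = u) := fun z u =>
    lt_of_lt_of_le (hQpos z true u) (pr_mono p hp (fun ω h => ⟨h.1, h.2.2.1, h.2.2.2⟩))
  have hΩ : Nonempty Ω := by
    by_contra h
    rw [not_nonempty_iff] at h
    rw [Finset.univ_eq_empty, Finset.sum_empty] at hsum
    exact one_ne_zero hsum.symm
  obtain ⟨ω0⟩ := hΩ
  have htpos : ∀ z, 0 < pr p (fun ω => Z ω = z ∧ L ω = l) := fun z =>
    lt_of_lt_of_le (hrpos z (U ω0)) (pr_mono p hp fun ω h => ⟨h.1, h.2.1⟩)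
  have hTpos : 0 < pr p (fun ω => L ω = l) :=
    lt_of_lt_of_le (htpos true) (pr_mono p hp fun ω h => h.2)
  -- f as a ratio
  have hfz : ∀ z, f z l = pr p (fun ω => Z ω = z ∧ L ω = l) / pr p (fun ω => L ω = l) := by
    intro z; rw [hf z l]; rfl
  have hfpos : ∀ z, 0 < f z l := fun z => by rw [hfz z]; exact div_pos (htpos z) hTpos
  -- IV independence, cross-multiplied
  have hIV : ∀ z u, pr p (fun ω => Z ω = z ∧ L ω = l ∧ U ω = u) * pr p (fun ω => L ω = l)
      = pr p (fun ω => L ω = l ∧ U ω = u) * pr p (fun ω => Z ω = z ∧ L ω = l) := by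
    intro z u
    have h := hIVind u z l
    simp only [cpr] at h
    rw [pr_congr p (show ∀ ω, (U ω = u ∧ (Z ω = z ∧ L ω = l)) ↔ (Z ω = z ∧ L ω = l ∧ U ω = u) from fun ω => by tauto)] at h
    rw [pr_congr p (show ∀ ω, (U ω = u ∧ L ω = l) ↔ (L ω = l ∧ U ω = u) from fun ω => by tauto)] at h
    exact (div_eq_div_iff (htpos z).ne' hTpos.ne').mp h
  -- division by f rewritten
  have hdiv : ∀ z u (x : ℝ), x / f z l
      = x * pr p (fun ω => L ω = l ∧ U ω = u) / pr p (fun ω => Z ω = z ∧ L ω = l ∧ U ω = u) := by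
    intro z u x
    rw [hfz z, div_div_eq_mul_div, div_eq_div_iff (htpos z).ne' (hrpos z u).ne']
    linear_combination x * (hIV z u)
  -- δ on (l,u)-cells
  have hδcell : ∀ u, δ l =
      pr p (fun ω => Z ω = true ∧ A ω = true ∧ L ω = l ∧ U ω = u)
        / pr p (fun ω => Z ω = true ∧ L ω = l ∧ U ω = u)
      - pr p (fun ω => Z ω = false ∧ A ω = true ∧ L ω = l ∧ U ω = u)
        / pr p (fun ω => Z ω = false ∧ L ω = l ∧ U ω = u) := by
    intro u
    rw [hhom l u, hδt l u]
    simp only [cpr]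
    rw [pr_congr p (show ∀ ω, (A ω = true ∧ (Z ω = true ∧ L ω = l ∧ U ω = u)) ↔ (Z ω = true ∧ A ω = true ∧ L ω = l ∧ U ω = u) from fun ω => by tauto)]
    rw [pr_congr p (show ∀ ω, (A ω = true ∧ (Z ω = false ∧ L ω = l ∧ U ω = u)) ↔ (Z ω = false ∧ A ω = true ∧ L ω = l ∧ U ω = u) from fun ω => by tauto)]
  -- r = Q true + Q false (split the cells over A)
  have hrsplit : ∀ z u, pr p (fun ω => Z ω = z ∧ L ω = l ∧ U ω = u)
      = pr p (fun ω => Z ω = z ∧ A ω = true ∧ L ω = l ∧ U ω = u)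
      + pr p (fun ω => Z ω = z ∧ A ω = false ∧ L ω = l ∧ U ω = u) := by
    intro z u
    have h := pr_split p (fun ω => Z ω = z ∧ L ω = l ∧ U ω = u) A
    rw [Fintype.sum_bool] at h
    rw [h]
    congr 1
    · exact pr_congr p fun ω => by tauto
    · exact pr_congr p fun ω => by tauto
  -- the key claim
  have hclaim : ∀ u,
      pr p (fun ω => Z ω = true ∧ A ω = a ∧ L ω = l ∧ U ω = u) / f true l
      - pr p (fun ω => Z ω = false ∧ A ω = a ∧ L ω = l ∧ U ω = u) / f false l
      = (if a then (1:ℝ) else -1) * δ l * pr p (fun ω => L ω = l ∧ U ω = u) := by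
    intro u
    rw [hdiv true u, hdiv false u]
    have h1 := hδcell u
    have hr1 := hrsplit true u
    have hr0 := hrsplit false u
    have hR1 := (hrpos true u).ne'
    have hR0 := (hrpos false u).ne'
    cases a
    · simp only [Bool.false_eq_true, if_false]
      field_simp
      field_simp at h1
      linear_combination ((pr p (fun ω => L ω = l ∧ U ω = u)) * h1 -
        pr p (fun ω => L ω = l ∧ U ω = u) * pr p (fun ω => Z ω = false ∧ L ω = l ∧ U ω = u) * hr1 +
        pr p (fun ω => L ω = l ∧ U ω = u) * pr p (fun ω => Z ω = true ∧ L ω = l ∧ U ω = u) * hr0)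
    · simp only [if_true]
      field_simp
      field_simp at h1
      linear_combination (-(pr p (fun ω => L ω = l ∧ U ω = u))) * h1
  -- notation for the integrand
  set G : Ω → ℝ := fun ω =>
      (if Z ω then (1:ℝ) else -1) * (if A ω = a then (1:ℝ) else 0) * Yo ω *
        (if a then (1:ℝ) else -1) / (δ (L ω) * f (Z ω) (L ω)) with hG
  -- cell values of the integrand numerator
  have cell_val : ∀ (u : 𝒰) (z a' : Bool),
      num p G (fun ω => (L ω = l ∧ U ω = u) ∧ (Z ω, A ω) = (z, a'))
      = (if a' = a then ((if z then (1:ℝ) else -1) * (if a then (1:ℝ) else -1) / (δ l * f z l)) else 0)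
        * (cex p (Y a) (fun ω => L ω = l ∧ U ω = u)
            * pr p (fun ω => Z ω = z ∧ A ω = a' ∧ L ω = l ∧ U ω = u)) := by
    intro u z a'
    rw [num_congr p G (show ∀ ω, ((L ω = l ∧ U ω = u) ∧ (Z ω, A ω) = (z, a')) ↔
        (Z ω = z ∧ A ω = a' ∧ L ω = l ∧ U ω = u) from fun ω => by
      simp only [Prod.mk.injEq]; tauto)]
    by_cases ha' : a' = a
    · subst ha'
      rw [if_pos rfl]
      have h1 : num p G (fun ω => Z ω = z ∧ A ω = a' ∧ L ω = l ∧ U ω = u)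
          = num p (fun ω => ((if z then (1:ℝ) else -1) * (if a' then (1:ℝ) else -1)
              / (δ l * f z l)) * Y a' ω) (fun ω => Z ω = z ∧ A ω = a' ∧ L ω = l ∧ U ω = u) := by
        apply num_fun_congr p hp
        intro ω hc hpω
        obtain ⟨hZ, hA, hL, hU⟩ := hc
        rw [hG]
        simp only [hZ, hA, hL, if_pos rfl]
        rw [hcons ω hpω, hA]
        norm_num
        split_ifs <;> ring
      rw [h1, num_const_mul, num_mul p (Y a') (hQpos z a' u).ne', hlat a' z a' l u]
    · rw [if_neg ha', zero_mul]
      have h1 : num p G (fun ω => Z ω = z ∧ A ω = a' ∧ L ω = l ∧ U ω = u)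
          = num p (fun _ => (0:ℝ)) (fun ω => Z ω = z ∧ A ω = a' ∧ L ω = l ∧ U ω = u) := by
        apply num_fun_congr p hp
        intro ω hc hpω
        obtain ⟨hZ, hA, hL, hU⟩ := hc
        rw [hG]
        have hAa : ¬ (A ω = a) := fun h => ha' (by rw [← hA, h])
        simp only [if_neg hAa]
        simp
      rw [h1, num_zero]
  -- per-u numerator equality
  have per_u : ∀ u, num p G (fun ω => L ω = l ∧ U ω = u)
      = num p (Y a) (fun ω => L ω = l ∧ U ω = u) := by
    intro u
    rw [num_split p G (fun ω => L ω = l ∧ U ω = u) (fun ω => (Z ω, A ω))]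
    rw [Fintype.sum_prod_type]
    simp only [Fintype.sum_bool]
    rw [cell_val u true true, cell_val u true false, cell_val u false true,
        cell_val u false false]
    rw [num_mul p (Y a) (hwpos u).ne']
    have hc := hclaim u
    have hft := (hfpos true).ne'
    have hff := (hfpos false).ne'
    have hδl := hδne l
    cases a
    · simp only [Bool.false_eq_true, Bool.true_eq_false, ↓reduceIte, if_false, if_true, zero_mul, add_zero, zero_add, mul_zero] at hc ⊢
      field_simp
      field_simp at hc
      linear_combination (-((cex p (Y (false : Bool)) fun ω => L ω = l ∧ U ω = u))) * hc
    · simp only [if_true, Bool.false_eq_true, Bool.true_eq_false, ↓reduceIte, if_false, zero_mul, add_zero, zero_add, mul_zero] at hc ⊢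
      field_simp
      field_simp at hc
      linear_combination ((cex p (Y (true : Bool)) fun ω => L ω = l ∧ U ω = u)) * hc
  -- conclude
  rw [cex_eq_num_div, cex_eq_num_div]
  rw [num_split p (Y a) (fun ω => L ω = l) U, num_split p G (fun ω => L ω = l) U]
  congr 1
  apply Finset.sum_congr rfl
  intro u _
  rw [num_congr p (Y a) (show ∀ ω, (L ω = l ∧ U ω = u) ↔ (L ω = l ∧ U ω = u) from fun _ => Iff.rfl)]
  exact (per_u u).symm
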